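/- Fix w > 0 and M > −1/4. If (x,y) is a critical point of the function R(x,y) = x² + y² restricted to the level set h_w⁻¹(M), then x = 0 and y is either −(√(1+4M)+1)/2 or (√(1+4M)−1)/2. -/

import Mathlib

open Real

/-- If `(x,y)` is a critical point of `R(x,y) = x² + y²` restricted to the level
set `h_w⁻¹(M)` (i.e. `∇R` is parallel to `∇h_w` there), then `x = 0` and
`y = −(√(1+4M)+1)/2` or `y = (√(1+4M)−1)/2`. -/
theorem hw_critical_points (w M : ℝ) (hw : 0 < w) (hM : -(1 / 4) < M)
    (p : ℝ × ℝ)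
    (hp : p.2 / Real.sqrt (1 + w ^ 2 * p.1 ^ 2) + p.1 ^ 2 + p.2 ^ 2 = M)
    (hcrit : ∃ lam : ℝ,
      fderiv ℝ (fun q : ℝ × ℝ => q.1 ^ 2 + q.2 ^ 2) p =
        lam • fderiv ℝ (fun q : ℝ × ℝ =>
          q.2 / Real.sqrt (1 + w ^ 2 * q.1 ^ 2) + q.1 ^ 2 + q.2 ^ 2) p) :
    p.1 = 0 ∧
      (p.2 = -((Real.sqrt (1 + 4 * M) + 1) / 2) ∨
       p.2 = (Real.sqrt (1 + 4 * M) - 1) / 2) := by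
  obtain ⟨lam, hlam⟩ := hcrit
  obtain ⟨x, y⟩ := p
  simp only at hp hlam ⊢
  have ht0 : (0:ℝ) < 1 + w ^ 2 * x ^ 2 := by positivity
  have hs0 : 0 < Real.sqrt (1 + w ^ 2 * x ^ 2) := Real.sqrt_pos.mpr ht0
  have hsq : Real.sqrt (1 + w ^ 2 * x ^ 2) ^ 2 = 1 + w ^ 2 * x ^ 2 := Real.sq_sqrt ht0.le
  have hx2 : HasFDerivAt (fun q : ℝ × ℝ => q.1 ^ 2)
      ((2 * x) • ContinuousLinearMap.fst ℝ ℝ ℝ) (x, y) := by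
    have hfst : HasFDerivAt (fun q : ℝ × ℝ => q.1) (ContinuousLinearMap.fst ℝ ℝ ℝ) (x, y) :=
      hasFDerivAt_fst
    have h := hfst.mul hfst
    have h2 : (fun q : ℝ × ℝ => q.1 * q.1) = fun q : ℝ × ℝ => q.1 ^ 2 := by
      funext q; exact (pow_two q.1).symm
    change HasFDerivAt (fun q : ℝ × ℝ => q.1 * q.1) _ _ at h
    rw [h2] at h
    exact h.congr_fderiv (by simp [two_mul, add_smul])
  have hy2 : HasFDerivAt (fun q : ℝ × ℝ => q.2 ^ 2)
      ((2 * y) • ContinuousLinearMap.snd ℝ ℝ ℝ) (x, y) := by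
    have hsnd : HasFDerivAt (fun q : ℝ × ℝ => q.2) (ContinuousLinearMap.snd ℝ ℝ ℝ) (x, y) :=
      hasFDerivAt_snd
    have h := hsnd.mul hsnd
    have h2 : (fun q : ℝ × ℝ => q.2 * q.2) = fun q : ℝ × ℝ => q.2 ^ 2 := by
      funext q; exact (pow_two q.2).symm
    change HasFDerivAt (fun q : ℝ × ℝ => q.2 * q.2) _ _ at h
    rw [h2] at h
    exact h.congr_fderiv (by simp [two_mul, add_smul])
  have h1 : HasFDerivAt (fun q : ℝ × ℝ => 1 + w ^ 2 * q.1 ^ 2)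
      ((w ^ 2) • ((2 * x) • ContinuousLinearMap.fst ℝ ℝ ℝ)) (x, y) :=
    (hx2.const_mul (w ^ 2)).const_add 1
  have hsqrt : HasDerivAt Real.sqrt (1 / (2 * Real.sqrt (1 + w ^ 2 * x ^ 2)))
      (1 + w ^ 2 * x ^ 2) := Real.hasDerivAt_sqrt ht0.ne'
  have hv : HasFDerivAt (fun q : ℝ × ℝ => Real.sqrt (1 + w ^ 2 * q.1 ^ 2))
      ((w ^ 2 * x / Real.sqrt (1 + w ^ 2 * x ^ 2)) • ContinuousLinearMap.fst ℝ ℝ ℝ) (x, y) := by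
    have h := hsqrt.comp_hasFDerivAt (x, y) h1
    have e : (w ^ 2 * x / Real.sqrt (1 + w ^ 2 * x ^ 2))
        = (1 / (2 * Real.sqrt (1 + w ^ 2 * x ^ 2))) * (w ^ 2 * (2 * x)) := by
      field_simp
    rw [e, ← smul_smul, ← smul_smul]
    exact h
  have hinvd : HasDerivAt (fun z : ℝ => z⁻¹)
      (-(Real.sqrt (1 + w ^ 2 * x ^ 2) ^ 2)⁻¹) (Real.sqrt (1 + w ^ 2 * x ^ 2)) :=
    hasDerivAt_inv hs0.ne'
  have hvinv : HasFDerivAt (fun q : ℝ × ℝ => (Real.sqrt (1 + w ^ 2 * q.1 ^ 2))⁻¹)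
      ((-(Real.sqrt (1 + w ^ 2 * x ^ 2) ^ 2)⁻¹ * (w ^ 2 * x / Real.sqrt (1 + w ^ 2 * x ^ 2)))
        • ContinuousLinearMap.fst ℝ ℝ ℝ) (x, y) := by
    have h := hinvd.comp_hasFDerivAt (x, y) hv
    rw [← smul_smul]
    exact h
  have hsnd : HasFDerivAt (fun q : ℝ × ℝ => q.2) (ContinuousLinearMap.snd ℝ ℝ ℝ) (x, y) :=
    hasFDerivAt_snd
  have hdiv : HasFDerivAt (fun q : ℝ × ℝ => q.2 / Real.sqrt (1 + w ^ 2 * q.1 ^ 2))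
      (y • ((-(Real.sqrt (1 + w ^ 2 * x ^ 2) ^ 2)⁻¹ * (w ^ 2 * x / Real.sqrt (1 + w ^ 2 * x ^ 2)))
          • ContinuousLinearMap.fst ℝ ℝ ℝ)
        + (Real.sqrt (1 + w ^ 2 * x ^ 2))⁻¹ • ContinuousLinearMap.snd ℝ ℝ ℝ) (x, y) := by
    have h := hsnd.mul hvinv
    have h2 : (fun q : ℝ × ℝ => q.2 * (Real.sqrt (1 + w ^ 2 * q.1 ^ 2))⁻¹)
        = fun q : ℝ × ℝ => q.2 / Real.sqrt (1 + w ^ 2 * q.1 ^ 2) := by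
      funext q; rw [div_eq_mul_inv]
    change HasFDerivAt (fun q : ℝ × ℝ => q.2 * (Real.sqrt (1 + w ^ 2 * q.1 ^ 2))⁻¹) _ _ at h
    rw [h2] at h
    exact h
  have hh : HasFDerivAt (fun q : ℝ × ℝ =>
      q.2 / Real.sqrt (1 + w ^ 2 * q.1 ^ 2) + q.1 ^ 2 + q.2 ^ 2)
      ((y • ((-(Real.sqrt (1 + w ^ 2 * x ^ 2) ^ 2)⁻¹
            * (w ^ 2 * x / Real.sqrt (1 + w ^ 2 * x ^ 2)))
          • ContinuousLinearMap.fst ℝ ℝ ℝ)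
        + (Real.sqrt (1 + w ^ 2 * x ^ 2))⁻¹ • ContinuousLinearMap.snd ℝ ℝ ℝ)
        + (2 * x) • ContinuousLinearMap.fst ℝ ℝ ℝ
        + (2 * y) • ContinuousLinearMap.snd ℝ ℝ ℝ) (x, y) :=
    (hdiv.add hx2).add hy2
  have hR : HasFDerivAt (fun q : ℝ × ℝ => q.1 ^ 2 + q.2 ^ 2)
      ((2 * x) • ContinuousLinearMap.fst ℝ ℝ ℝ
        + (2 * y) • ContinuousLinearMap.snd ℝ ℝ ℝ) (x, y) :=
    hx2.add hy2
  rw [hR.fderiv, hh.fderiv] at hlam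
  have eqA := congrArg (fun L : ℝ × ℝ →L[ℝ] ℝ => L (1, 0)) hlam
  have eqB := congrArg (fun L : ℝ × ℝ →L[ℝ] ℝ => L (0, 1)) hlam
  simp only [ContinuousLinearMap.add_apply, ContinuousLinearMap.smul_apply,
    ContinuousLinearMap.coe_fst', ContinuousLinearMap.coe_snd', smul_eq_mul] at eqA eqB
  norm_num at eqA eqB
  clear hlam hsnd hinvd hvinv hdiv hh hR hsqrt hv h1 hx2 hy2
  have hx0 : x = 0 := by
    by_contra hx
    generalize hsdef : Real.sqrt (1 + w ^ 2 * x ^ 2) = s at hs0 hsq eqA eqB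
    have hsne : s ≠ 0 := ne_of_gt hs0
    field_simp at eqA eqB
    -- eqA : 2 * x * (s ^ 2 * s) = lam * (-(y * (w ^ 2 * x)) + 2 * x * (s ^ 2 * s))
    -- eqB : 2 * y * s = lam * (1 + 2 * y * s)
    have A2 : 2 * (s ^ 2 * s) = lam * (-(y * w ^ 2) + 2 * (s ^ 2 * s)) := by
      have h : x * (2 * (s ^ 2 * s)) = x * (lam * (-(y * w ^ 2) + 2 * (s ^ 2 * s))) := by
        linear_combination x * eqA
      exact mul_left_cancel₀ hx h
    have key : lam * (y ^ 2 * w ^ 2 + s ^ 2) = 0 := by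
      linear_combination y * A2 - s ^ 2 * eqB
    have hpos : 0 < y ^ 2 * w ^ 2 + s ^ 2 := by positivity
    have hlam0 : lam = 0 := by
      rcases mul_eq_zero.mp key with h | h
      · exact h
      · exact absurd h hpos.ne'
    rw [hlam0] at A2
    nlinarith [pow_pos hs0 3, A2]
  subst hx0
  refine ⟨rfl, ?_⟩
  have hyM : y + y ^ 2 = M := by
    have h : y / Real.sqrt (1 + w ^ 2 * 0 ^ 2) + 0 ^ 2 + y ^ 2 = M := hp
    norm_num [Real.sqrt_one] at h
    linarith [h]
  have h14 : (0 : ℝ) ≤ 1 + 4 * M := by linarith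
  have key : (2 * y + 1) ^ 2 = 1 + 4 * M := by nlinarith [hyM]
  have hsr : Real.sqrt (1 + 4 * M) = |2 * y + 1| := by
    rw [← key]; exact Real.sqrt_sq_eq_abs _
  rcases abs_cases (2 * y + 1) with ⟨h, _⟩ | ⟨h, _⟩
  · right; rw [hsr, h]; ring
  · left; rw [hsr, h]; ring
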